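/- arXiv:1504.07326 — 2 statements merged into one kernel-verified Lean document; each statement's English description precedes it below -/
import Mathlib

section
/- For every r ∈ ℝ, the sum over all integers j of (r − j)·φ(r − j) equals 0 (the sum has only finitely many nonzero terms since φ vanishes outside [−2, 2]). This is the one-dimensional first-moment condition underlying the discrete delta function. -/
/-- The Peskin four-point kernel. -/
noncomputable def peskinPhi (r : ℝ) : ℝ :=
  if |r| ≤ 1 then (3 - 2 * |r| + Real.sqrt (1 + 4 * |r| - 4 * |r| ^ 2)) / 8
  else if |r| ≤ 2 then (5 - 2 * |r| - Real.sqrt (-7 + 12 * |r| - 4 * |r| ^ 2)) / 8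
  else 0

lemma peskinPhi_eq_zero {x : ℝ} (h : 2 ≤ |x|) : peskinPhi x = 0 := by
  unfold peskinPhi
  rcases eq_or_lt_of_le h with h | h
  · rw [if_neg (by linarith), if_pos (by linarith), ← h]
    norm_num [Real.sqrt_one]
  · rw [if_neg (by linarith), if_neg (by linarith)]

/-- One-dimensional first-moment condition: for every `r ∈ ℝ`, the sum over all
integers `j` of `(r − j)·φ(r − j)` equals `0`. -/
theorem peskinPhi_firstMoment (r : ℝ) :
    ∑' j : ℤ, (r - j) * peskinPhi (r - j) = 0 := by
  set n := ⌊r⌋ with hn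
  have hn1 : (n : ℝ) ≤ r := Int.floor_le r
  have hn2 : r < n + 1 := Int.lt_floor_add_one r
  have key : ∑' j : ℤ, (r - j) * peskinPhi (r - j)
      = ∑ j ∈ ({n - 1, n, n + 1, n + 2} : Finset ℤ), (r - j) * peskinPhi (r - j) := by
    apply tsum_eq_sum
    intro j hj
    simp only [Finset.mem_insert, Finset.mem_singleton] at hj
    push_neg at hj
    have hj' : j ≤ n - 2 ∨ n + 3 ≤ j := by omega
    have h2 : 2 ≤ |r - j| := by
      rcases hj' with h | h
      · have : (j : ℝ) ≤ (n : ℝ) - 2 := by exact_mod_cast h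
        rw [abs_of_nonneg (by linarith)]; linarith
      · have : (n : ℝ) + 3 ≤ (j : ℝ) := by exact_mod_cast h
        rw [abs_of_nonpos (by linarith)]; linarith
    rw [peskinPhi_eq_zero h2, mul_zero]
  rw [key, Finset.sum_insert (by simp only [Finset.mem_insert, Finset.mem_singleton]; omega), Finset.sum_insert (by simp only [Finset.mem_insert, Finset.mem_singleton]; omega),
      Finset.sum_insert (by simp only [Finset.mem_insert, Finset.mem_singleton]; omega), Finset.sum_singleton]
  set s : ℝ := r - n with hs
  have hs0 : 0 ≤ s := by simp [hs]; linarith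
  have hs1 : s < 1 := by simp [hs]; linarith
  have e1 : r - ((n - 1 : ℤ) : ℝ) = s + 1 := by push_cast; ring
  have e2 : r - ((n : ℤ) : ℝ) = s := rfl
  have e3 : r - ((n + 1 : ℤ) : ℝ) = s - 1 := by push_cast; ring
  have e4 : r - ((n + 2 : ℤ) : ℝ) = s - 2 := by push_cast; ring
  rw [e1, e3, e4]
  rcases eq_or_lt_of_le hs0 with h0 | h0
  · -- s = 0
    have hφ1 : peskinPhi 1 = 1 / 4 := by
      unfold peskinPhi
      rw [abs_one, if_pos le_rfl]
      norm_num [Real.sqrt_one]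
    have hφm1 : peskinPhi (-1) = 1 / 4 := by
      unfold peskinPhi
      rw [abs_neg, abs_one, if_pos le_rfl]
      norm_num [Real.sqrt_one]
    have hφm2 : peskinPhi (-2) = 0 := peskinPhi_eq_zero (by rw [abs_neg]; norm_num)
    rw [← h0]
    norm_num [hφ1, hφm1, hφm2]
  · -- 0 < s < 1
    set A : ℝ := Real.sqrt (1 + 4 * s - 4 * s ^ 2) with hA
    have h1 : peskinPhi (s + 1) = (3 - 2 * s - A) / 8 := by
      unfold peskinPhi
      rw [abs_of_nonneg (by linarith : (0:ℝ) ≤ s + 1), if_neg (by linarith),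
        if_pos (by linarith)]
      rw [show -7 + 12 * (s + 1) - 4 * (s + 1) ^ 2 = 1 + 4 * s - 4 * s ^ 2 by ring]
      ring
    have h2 : peskinPhi s = (3 - 2 * s + A) / 8 := by
      unfold peskinPhi
      rw [abs_of_nonneg hs0, if_pos (by linarith)]
    have h3 : peskinPhi (s - 1) = (1 + 2 * s + A) / 8 := by
      unfold peskinPhi
      rw [abs_of_nonpos (by linarith : s - 1 ≤ 0), if_pos (by linarith)]
      rw [show 1 + 4 * -(s - 1) - 4 * (-(s - 1)) ^ 2 = 1 + 4 * s - 4 * s ^ 2 by ring]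
      ring
    have h4 : peskinPhi (s - 2) = (1 + 2 * s - A) / 8 := by
      unfold peskinPhi
      rw [abs_of_nonpos (by linarith : s - 2 ≤ 0), if_neg (by push_neg; linarith),
        if_pos (by linarith)]
      rw [show -7 + 12 * -(s - 2) - 4 * (-(s - 2)) ^ 2 = 1 + 4 * s - 4 * s ^ 2 by ring]
      ring
    rw [h1, h2, h3, h4]
    ring
end

section
/- Unity condition for the discrete delta function: for every grid spacing h > 0 and every point X ∈ ℝ³, the sum over all grid points x = h·v with v ∈ ℤ³ of δ̂(x − X, h)·h³ equals 1. -/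
/-- The smoothed Dirac delta function `δ̂(x, ω) = ω⁻³ φ(x₁/ω) φ(x₂/ω) φ(x₃/ω)`. -/
noncomputable def deltaHat (x : Fin 3 → ℝ) (ω : ℝ) : ℝ :=
  ω⁻¹ ^ 3 * (peskinPhi (x 0 / ω) * peskinPhi (x 1 / ω) * peskinPhi (x 2 / ω))

lemma peskinPhi_neg (r : ℝ) : peskinPhi (-r) = peskinPhi r := by
  unfold peskinPhi; rw [abs_neg]

lemma peskinPhi_zero_of {r : ℝ} (hr : 2 ≤ |r|) : peskinPhi r = 0 := by
  unfold peskinPhi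
  rcases eq_or_lt_of_le hr with h | h
  · rw [if_neg (by linarith), if_pos h.ge, ← h]
    norm_num
  · rw [if_neg (by linarith), if_neg (by linarith)]

lemma peskinPhi_low {r : ℝ} (h0 : 0 ≤ r) (h1 : r ≤ 1) :
    peskinPhi r = (3 - 2 * r + Real.sqrt (1 + 4 * r - 4 * r ^ 2)) / 8 := by
  unfold peskinPhi
  rw [abs_of_nonneg h0, if_pos h1]

lemma peskinPhi_high {r : ℝ} (h1 : 1 ≤ r) (h2 : r ≤ 2) :
    peskinPhi r = (5 - 2 * r - Real.sqrt (-7 + 12 * r - 4 * r ^ 2)) / 8 := by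
  unfold peskinPhi
  rw [abs_of_nonneg (by linarith)]
  rcases eq_or_lt_of_le h1 with h | h
  · rw [← h, if_pos le_rfl]
    norm_num
  · rw [if_neg (by linarith), if_pos h2]

lemma peskinPhi_sum_zero (r : ℝ) {n : ℤ}
    (hn : n ∉ Finset.Icc (⌊r⌋ - 1) (⌊r⌋ + 2)) : peskinPhi ((n : ℝ) - r) = 0 := by
  have hfl : (⌊r⌋ : ℝ) ≤ r := Int.floor_le r
  have hfu : r < ⌊r⌋ + 1 := Int.lt_floor_add_one r
  simp only [Finset.mem_Icc, not_and_or, not_le] at hn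
  apply peskinPhi_zero_of
  rcases hn with hl | hu
  · have : (n : ℝ) ≤ (⌊r⌋ : ℝ) - 2 := by exact_mod_cast Int.le_of_lt_add_one (by omega)
    exact le_abs.mpr (Or.inr (by linarith))
  · have : (⌊r⌋ : ℝ) + 3 ≤ (n : ℝ) := by exact_mod_cast (by omega : ⌊r⌋ + 3 ≤ n)
    exact le_abs.mpr (Or.inl (by linarith))

lemma peskinPhi_sum_one (r : ℝ) :
    ∑ n ∈ Finset.Icc (⌊r⌋ - 1) (⌊r⌋ + 2), peskinPhi ((n : ℝ) - r) = 1 := by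
  set m := ⌊r⌋ with hm
  set t : ℝ := r - m with ht
  have ht0 : 0 ≤ t := by
    have := Int.floor_le r; simp [ht]; linarith
  have ht1 : t < 1 := by
    have := Int.lt_floor_add_one r; simp [ht]; linarith
  set s := Real.sqrt (1 + 4 * t - 4 * t ^ 2) with hs
  have e1 : peskinPhi (((m - 1 : ℤ) : ℝ) - r) = (3 - 2 * t - s) / 8 := by
    have h : ((m - 1 : ℤ) : ℝ) - r = -(1 + t) := by push_cast; rw [ht]; ring
    rw [h, peskinPhi_neg, peskinPhi_high (by linarith) (by linarith),
      show (-7 + 12 * (1 + t) - 4 * (1 + t) ^ 2) = 1 + 4 * t - 4 * t ^ 2 by ring, ← hs]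
    ring
  have e2 : peskinPhi (((m : ℤ) : ℝ) - r) = (3 - 2 * t + s) / 8 := by
    have h : ((m : ℤ) : ℝ) - r = -t := by rw [ht]; ring
    rw [h, peskinPhi_neg, peskinPhi_low ht0 (by linarith), ← hs]
  have e3 : peskinPhi (((m + 1 : ℤ) : ℝ) - r) = (1 + 2 * t + s) / 8 := by
    have h : ((m + 1 : ℤ) : ℝ) - r = 1 - t := by push_cast; rw [ht]; ring
    rw [h, peskinPhi_low (by linarith) (by linarith),
      show (1 + 4 * (1 - t) - 4 * (1 - t) ^ 2) = 1 + 4 * t - 4 * t ^ 2 by ring, ← hs]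
    ring
  have e4 : peskinPhi (((m + 2 : ℤ) : ℝ) - r) = (1 + 2 * t - s) / 8 := by
    have h : ((m + 2 : ℤ) : ℝ) - r = 2 - t := by push_cast; rw [ht]; ring
    rw [h, peskinPhi_high (by linarith) (by linarith),
      show (-7 + 12 * (2 - t) - 4 * (2 - t) ^ 2) = 1 + 4 * t - 4 * t ^ 2 by ring, ← hs]
    ring
  have hset : Finset.Icc (m - 1) (m + 2) = {m - 1, m, m + 1, m + 2} := by
    ext n; simp [Finset.mem_Icc]; omega
  rw [hset, Finset.sum_insert (by simp only [Finset.mem_insert, Finset.mem_singleton]; omega), Finset.sum_insert (by simp only [Finset.mem_insert, Finset.mem_singleton]; omega),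
    Finset.sum_insert (by simp only [Finset.mem_insert, Finset.mem_singleton]; omega), Finset.sum_singleton, e1, e2, e3, e4]
  ring

/-- Unity condition for the discrete delta function: for every grid spacing `h > 0` and
every point `X ∈ ℝ³`, the sum over all grid points `x = h·v`, `v ∈ ℤ³`, of
`δ̂(x − X, h)·h³` equals `1`. -/
theorem deltaHat_unity (h : ℝ) (hh : 0 < h) (X : Fin 3 → ℝ) :
    ∑' v : Fin 3 → ℤ, deltaHat (fun i => h * (v i : ℝ) - X i) h * h ^ 3 = 1 := by
  have hne : h ≠ 0 := ne_of_gt hh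
  have hterm : ∀ v : Fin 3 → ℤ,
      deltaHat (fun i => h * (v i : ℝ) - X i) h * h ^ 3
        = ∏ i, peskinPhi ((v i : ℝ) - X i / h) := by
    intro v
    unfold deltaHat
    rw [Fin.prod_univ_three]
    have harg : ∀ i : Fin 3, (h * (v i : ℝ) - X i) / h = (v i : ℝ) - X i / h := by
      intro i; field_simp
    rw [harg 0, harg 1, harg 2]
    field_simp
  rw [tsum_congr hterm]
  rw [tsum_eq_sum (s := Fintype.piFinset fun i => Finset.Icc (⌊X i / h⌋ - 1) (⌊X i / h⌋ + 2))
    (by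
      intro v hv
      simp only [Fintype.mem_piFinset, not_forall] at hv
      obtain ⟨i, hi⟩ := hv
      exact Finset.prod_eq_zero (Finset.mem_univ i) (peskinPhi_sum_zero _ hi))]
  rw [← Finset.prod_univ_sum (fun i => Finset.Icc (⌊X i / h⌋ - 1) (⌊X i / h⌋ + 2))
    (fun i n => peskinPhi ((n : ℝ) - X i / h))]
  simp [peskinPhi_sum_one]
end
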